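/- Let d = 2^ℓ, let δ ∈ (0, 1/2), set α = Φ(3) and β = φ(4), let x, x_1, …, x_n ∈ ℝ^d, and let y = h̃(x), y_i = h̃(x_i) for a fixed realization of the diagonal matrices. Suppose this realization satisfies: for every z ∈ ℝ^d with ‖z‖ = 1, (1/(md)) Σ_{p,q} 1{h̃_{p,q}(z) ≤ 2} ≤ α − β/4 and (1/(md)) Σ_{p,q} 1{h̃_{p,q}(z) ≤ 4} ≥ α + β/4. Let l_1, …, l_k be i.i.d. uniform on [md]. There is an absolute constant C > 0 such that if k ≥ C β⁻²(log n + log(1/δ)), then with probability at least 1 − δ/4 over the indices l_1, …, l_k, for every i ∈ [n]: 2‖x − x_i‖ ≤ quant_α({y_{l_p} − (y_i)_{l_p}}_{p∈[k]}) ≤ 4‖x − x_i‖. -/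

import Mathlib

open MeasureTheory ProbabilityTheory Real
open scoped ENNReal NNReal Classical

noncomputable section

/-- The Sylvester–Hadamard matrix of size `2^ℓ`: `H 0 = [1]`,
`H (ℓ+1) = [[H ℓ, H ℓ],[H ℓ, -H ℓ]]`. -/
def Had : ∀ ℓ : ℕ, Matrix (Fin (2 ^ ℓ)) (Fin (2 ^ ℓ)) ℝ
  | 0 => 1
  | (ℓ + 1) =>
      Matrix.reindex (finSumFinEquiv.trans (finCongr (by rw [pow_succ, mul_two])))
        (finSumFinEquiv.trans (finCongr (by rw [pow_succ, mul_two])))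
        (Matrix.fromBlocks (Had ℓ) (Had ℓ) (Had ℓ) (-(Had ℓ)))

/-- `rht ℓ m D z j k = (H_d D^j z)_k`, the `(j,k)` entry of the randomized Hadamard
transform of `z`, where `D j` records the diagonal entries of the diagonal matrix `D^j`. -/
def rht (ℓ m : ℕ) (D : Fin m → Fin (2 ^ ℓ) → ℝ) (z : EuclideanSpace ℝ (Fin (2 ^ ℓ)))
    (j : Fin m) (k : Fin (2 ^ ℓ)) : ℝ :=
  (Had ℓ).mulVec (fun i => D j i * z i) k

/-- The joint law of the diagonal entries of `D^1, …, D^m`: i.i.d. standard Gaussians. -/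
def diagMeasure (ℓ m : ℕ) : Measure (Fin m → Fin (2 ^ ℓ) → ℝ) :=
  Measure.pi fun _ => Measure.pi fun _ => gaussianReal 0 1

/-- For `α ∈ (0,1)` and a finite family `v : ι → ℝ`, `quant α v` is the α-th quantile:
the smallest value `s` of the family such that at least an `α` fraction of the family
is `≤ s`. -/
def quant {ι : Type*} [Fintype ι] (α : ℝ) (v : ι → ℝ) : ℝ :=
  sInf {s | s ∈ Set.range v ∧
    α * (Fintype.card ι : ℝ) ≤ ((Finset.univ.filter fun p => v p ≤ s).card : ℝ)}

/-- `Φ(3)`, where `Φ` is the standard Gaussian CDF. -/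
def gaussAlpha : ℝ := ((gaussianReal 0 1) (Set.Iic (3 : ℝ))).toReal

/-- `φ(4)`, where `φ` is the standard Gaussian density. -/
def gaussBeta : ℝ := gaussianPDFReal 0 1 4

/-- Uniform distribution over the `m·d` indices (as pairs `(j,k)`). -/
def unifIndex (ℓ m : ℕ) : Measure (Fin m × Fin (2 ^ ℓ)) :=
  ((m * 2 ^ ℓ : ℕ) : ℝ≥0∞)⁻¹ • Measure.count

/-- The joint law of `k` i.i.d. uniform indices in `[md]`. -/
def indexMeasure (ℓ m k : ℕ) : Measure (Fin k → Fin m × Fin (2 ^ ℓ)) :=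
  Measure.pi fun _ => unifIndex ℓ m
namespace QTE

lemma exp_le_quadratic {x : ℝ} (h0 : 0 ≤ x) (h1 : x ≤ 1) : Real.exp x ≤ 1 + x + x ^ 2 := by
  have h := Real.exp_bound (x := x) (by rwa [abs_of_nonneg h0]) (n := 2) (by norm_num)
  have h2 : |Real.exp x - ∑ i ∈ Finset.range 2, x ^ i / i.factorial| ≤ x ^ 2 * (3 / 4) := by
    convert h using 2
    · rw [abs_of_nonneg h0]
    · norm_num [Nat.factorial]
  rw [abs_le] at h2
  have := h2.2
  simp [Finset.sum_range_succ, Nat.factorial] at this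
  nlinarith

lemma chernoff {Ω : Type*} [Fintype Ω] (g : Ω → ℝ)
    (hg : ∀ ω, g ω = 0 ∨ g ω = 1) {a b : ℝ} (hb0 : 0 < b) (hb1 : b ≤ 1) (ha1 : a ≤ 1)
    (hmean : ∑ ω, g ω ≤ (a - b / 4) * (Fintype.card Ω : ℝ)) (k : ℕ) :
    (((Finset.univ : Finset (Fin k → Ω)).filter fun f => a * k ≤ ∑ p, g (f p)).card : ℝ) ≤
      Real.exp (-(k * b ^ 2) / 64) * (Fintype.card Ω : ℝ) ^ k := by
  classical
  set N : ℕ := Fintype.card Ω with hN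
  have hgnn : ∀ ω, 0 ≤ g ω := fun ω => by rcases hg ω with h | h <;> rw [h] <;> norm_num
  by_cases hΩ : IsEmpty Ω
  · rcases Nat.eq_zero_or_pos k with hk | hk
    · subst hk
      have h1 : ((Finset.univ : Finset (Fin 0 → Ω)).filter
          fun f => a * ((0:ℕ):ℝ) ≤ ∑ p, g (f p)).card ≤ 1 := by
        refine le_trans (Finset.card_filter_le _ _) (le_of_eq ?_)
        simp
      have h2 : Real.exp (-(((0:ℕ):ℝ) * b ^ 2) / 64) * (N : ℝ) ^ (0:ℕ) = 1 := by
        norm_num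
      rw [h2]
      exact_mod_cast h1
    · haveI : IsEmpty (Fin k → Ω) := ⟨fun f => hΩ.elim (f ⟨0, hk⟩)⟩
      rw [show (Finset.univ : Finset (Fin k → Ω)) = ∅ from Finset.univ_eq_empty,
        Finset.filter_empty]
      simp only [Finset.card_empty, Nat.cast_zero]
      positivity
  · rw [not_isEmpty_iff] at hΩ
    have hNpos : 0 < (N : ℝ) := by
      have : 0 < N := Fintype.card_pos
      exact_mod_cast this
    set lam : ℝ := b / 8 with hlam
    have hlam0 : 0 < lam := by positivity
    have hlam1 : lam ≤ 1 := by rw [hlam]; linarith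
    have hS0 : 0 ≤ ∑ ω, g ω := Finset.sum_nonneg fun ω _ => hgnn ω
    have hab : 0 ≤ a - b / 4 := by nlinarith
    have step1 : (((Finset.univ : Finset (Fin k → Ω)).filter
          fun f => a * k ≤ ∑ p, g (f p)).card : ℝ) ≤
        ∑ f : Fin k → Ω, Real.exp (lam * ((∑ p, g (f p)) - a * k)) := by
      rw [Finset.card_eq_sum_ones, Nat.cast_sum]
      calc ∑ f ∈ (Finset.univ : Finset (Fin k → Ω)).filter
            (fun f => a * k ≤ ∑ p, g (f p)), ((1:ℕ):ℝ)
          ≤ ∑ f ∈ (Finset.univ : Finset (Fin k → Ω)).filter (fun f => a * k ≤ ∑ p, g (f p)),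
              Real.exp (lam * ((∑ p, g (f p)) - a * k)) := by
            apply Finset.sum_le_sum
            intro f hf
            rw [Finset.mem_filter] at hf
            have : (0:ℝ) ≤ lam * ((∑ p, g (f p)) - a * k) :=
              mul_nonneg hlam0.le (by linarith [hf.2])
            simpa using Real.one_le_exp this
        _ ≤ _ := Finset.sum_le_sum_of_subset_of_nonneg (Finset.filter_subset _ _)
              (fun f _ _ => (Real.exp_pos _).le)
    have step2 : ∑ f : Fin k → Ω, Real.exp (lam * ((∑ p, g (f p)) - a * k)) =
        Real.exp (-(lam * a * k)) * (∑ ω, Real.exp (lam * g ω)) ^ k := by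
      have h1 : ∀ f : Fin k → Ω, Real.exp (lam * ((∑ p, g (f p)) - a * k)) =
          Real.exp (-(lam * a * k)) * ∏ p, Real.exp (lam * g (f p)) := by
        intro f
        have h2 : lam * ((∑ p, g (f p)) - a * k) = (∑ p, lam * g (f p)) + -(lam * a * k) := by
          rw [mul_sub, Finset.mul_sum]
          ring
        rw [h2, Real.exp_add, Real.exp_sum]
        exact mul_comm _ _
      simp_rw [h1, ← Finset.mul_sum]
      congr 1
      rw [Finset.sum_pow']
      rw [← Fintype.piFinset_univ]
    have step3 : ∑ ω, Real.exp (lam * g ω) ≤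
        (N : ℝ) * Real.exp ((a - b/4) * (lam + lam ^ 2)) := by
      have h1 : ∀ ω, Real.exp (lam * g ω) = 1 + g ω * (Real.exp lam - 1) := by
        intro ω
        rcases hg ω with h | h <;> rw [h] <;> simp
      rw [Finset.sum_congr rfl (fun ω _ => h1 ω)]
      rw [Finset.sum_add_distrib, ← Finset.sum_mul]
      have hexplam : (0:ℝ) ≤ Real.exp lam - 1 := by
        have := Real.one_le_exp hlam0.le; linarith
      have h2 : (∑ ω, g ω) * (Real.exp lam - 1) ≤ ((a - b/4) * N) * (Real.exp lam - 1) :=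
        mul_le_mul_of_nonneg_right hmean hexplam
      have h3 : Real.exp lam - 1 ≤ lam + lam ^ 2 := by
        have := exp_le_quadratic hlam0.le hlam1; linarith
      have h4 : ((a - b/4) * N) * (Real.exp lam - 1) ≤ ((a - b/4) * N) * (lam + lam ^ 2) :=
        mul_le_mul_of_nonneg_left h3 (by positivity)
      have h5 : 1 + (a - b/4) * (lam + lam ^ 2) ≤ Real.exp ((a - b/4) * (lam + lam ^ 2)) := by
        have := Real.add_one_le_exp ((a - b/4) * (lam + lam ^ 2)); linarith
      have hcard : ∑ _ω : Ω, (1:ℝ) = (N : ℝ) := by simp [hN]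
      calc (∑ _ω : Ω, (1:ℝ)) + (∑ ω, g ω) * (Real.exp lam - 1)
          ≤ (N:ℝ) + ((a - b/4) * N) * (lam + lam ^ 2) := by
            rw [hcard]; linarith
        _ = (N:ℝ) * (1 + (a - b/4) * (lam + lam ^ 2)) := by ring
        _ ≤ (N:ℝ) * Real.exp ((a - b/4) * (lam + lam ^ 2)) :=
            mul_le_mul_of_nonneg_left h5 hNpos.le
    have hbase : (0:ℝ) ≤ ∑ ω, Real.exp (lam * g ω) :=
      Finset.sum_nonneg fun ω _ => (Real.exp_pos _).le
    calc (((Finset.univ : Finset (Fin k → Ω)).filter fun f => a * k ≤ ∑ p, g (f p)).card : ℝ)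
        ≤ Real.exp (-(lam * a * k)) * (∑ ω, Real.exp (lam * g ω)) ^ k := by
          rw [← step2]; exact step1
      _ ≤ Real.exp (-(lam * a * k)) *
            ((N : ℝ) * Real.exp ((a - b/4) * (lam + lam ^ 2))) ^ k := by
          apply mul_le_mul_of_nonneg_left _ (Real.exp_pos _).le
          exact pow_le_pow_left₀ hbase step3 k
      _ = Real.exp (-(lam * a * k) + k * ((a - b/4) * (lam + lam ^ 2))) * (N : ℝ) ^ k := by
          rw [mul_pow, ← Real.exp_nat_mul, Real.exp_add]
          ring
      _ ≤ Real.exp (-(k * b ^ 2) / 64) * (N : ℝ) ^ k := by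
          apply mul_le_mul_of_nonneg_right _ (by positivity)
          apply Real.exp_le_exp.mpr
          have hk0 : (0:ℝ) ≤ (k:ℝ) := Nat.cast_nonneg k
          have key : -(lam * a) + (a - b/4) * (lam + lam ^ 2) ≤ -(b ^ 2) / 64 := by
            have h1 : (a - b/4) * lam ^ 2 ≤ lam ^ 2 := by nlinarith
            nlinarith [sq_nonneg lam]
          nlinarith [mul_le_mul_of_nonneg_left key hk0]

lemma chernoff' {Ω : Type*} [Fintype Ω] (g : Ω → ℝ)
    (hg : ∀ ω, g ω = 0 ∨ g ω = 1) {a b : ℝ} (hb0 : 0 < b) (hb1 : b ≤ 1) (ha0 : 0 ≤ a)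
    (hmean : (a + b / 4) * (Fintype.card Ω : ℝ) ≤ ∑ ω, g ω) (k : ℕ) :
    (((Finset.univ : Finset (Fin k → Ω)).filter fun f => ¬ a * k ≤ ∑ p, g (f p)).card : ℝ) ≤
      Real.exp (-(k * b ^ 2) / 64) * (Fintype.card Ω : ℝ) ^ k := by
  classical
  set h : Ω → ℝ := fun ω => 1 - g ω with hh
  have hh01 : ∀ ω, h ω = 0 ∨ h ω = 1 := fun ω => by
    rcases hg ω with hgw | hgw <;> simp [hh, hgw]
  have hmean' : ∑ ω, h ω ≤ ((1 - a) - b / 4) * (Fintype.card Ω : ℝ) := by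
    simp only [hh, Finset.sum_sub_distrib, Finset.sum_const, Finset.card_univ, nsmul_eq_mul,
      mul_one]
    linarith
  have hsub : ((Finset.univ : Finset (Fin k → Ω)).filter fun f => ¬ a * k ≤ ∑ p, g (f p)) ⊆
      ((Finset.univ : Finset (Fin k → Ω)).filter fun f => (1 - a) * k ≤ ∑ p, h (f p)) := by
    intro f hf
    rw [Finset.mem_filter] at hf ⊢
    refine ⟨hf.1, ?_⟩
    have hlt : ∑ p, g (f p) < a * k := lt_of_not_ge hf.2
    have hsum : ∑ p, h (f p) = (k : ℝ) - ∑ p, g (f p) := by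
      simp [hh, Finset.sum_sub_distrib]
    rw [hsum]
    nlinarith
  calc (((Finset.univ : Finset (Fin k → Ω)).filter fun f => ¬ a * k ≤ ∑ p, g (f p)).card : ℝ)
      ≤ (((Finset.univ : Finset (Fin k → Ω)).filter
          fun f => (1 - a) * k ≤ ∑ p, h (f p)).card : ℝ) :=
        Nat.cast_le.mpr (Finset.card_le_card hsub)
    _ ≤ _ := chernoff h hh01 hb0 hb1 (by linarith) hmean' k

lemma quant_bounds {k : ℕ} (hk : 0 < k) {a : ℝ} (ha0 : 0 < a) (ha1 : a ≤ 1)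
    (w : Fin k → ℝ) {t₁ t₂ : ℝ}
    (h1 : (((Finset.univ : Finset (Fin k)).filter fun p => w p ≤ t₁).card : ℝ) < a * k)
    (h2 : a * k ≤ (((Finset.univ : Finset (Fin k)).filter fun p => w p ≤ t₂).card : ℝ)) :
    t₁ ≤ quant a w ∧ quant a w ≤ t₂ := by
  classical
  set S : Set ℝ := {s | s ∈ Set.range w ∧
    a * (Fintype.card (Fin k) : ℝ) ≤
      (((Finset.univ : Finset (Fin k)).filter fun p => w p ≤ s).card : ℝ)} with hS
  have hquant : quant a w = sInf S := rfl
  have hkr : (0:ℝ) < (k : ℝ) := Nat.cast_pos.mpr hk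
  have hcard : (Fintype.card (Fin k) : ℝ) = (k : ℝ) := by simp
  haveI : Nonempty (Fin k) := ⟨⟨0, hk⟩⟩
  obtain ⟨p₀, -, hmax⟩ := Finset.exists_max_image (Finset.univ : Finset (Fin k)) w
    ⟨⟨0, hk⟩, Finset.mem_univ _⟩
  have hs0 : w p₀ ∈ S := by
    refine ⟨⟨p₀, rfl⟩, ?_⟩
    rw [hcard]
    have hall : ((Finset.univ : Finset (Fin k)).filter fun p => w p ≤ w p₀) = Finset.univ :=
      Finset.filter_true_of_mem (fun p _ => hmax p (Finset.mem_univ p))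
    rw [hall]
    simp only [Finset.card_univ, Fintype.card_fin]
    nlinarith
  have hbdd : BddBelow S := ((Set.finite_range w).subset (fun s hs => hs.1)).bddBelow
  rw [hquant]
  constructor
  · apply le_csInf ⟨_, hs0⟩
    intro s hs
    by_contra hlt
    push_neg at hlt
    have hsub : ((Finset.univ : Finset (Fin k)).filter fun p => w p ≤ s) ⊆
        ((Finset.univ : Finset (Fin k)).filter fun p => w p ≤ t₁) := by
      intro q hq
      rw [Finset.mem_filter] at hq ⊢
      exact ⟨hq.1, le_trans hq.2 hlt.le⟩
    have hcc := Finset.card_le_card hsub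
    have hs2 := hs.2
    rw [hcard] at hs2
    have hle : ((((Finset.univ : Finset (Fin k)).filter fun p => w p ≤ s).card : ℝ)) ≤
        (((Finset.univ : Finset (Fin k)).filter fun p => w p ≤ t₁).card : ℝ) :=
      Nat.cast_le.mpr hcc
    linarith
  · set T := (Finset.univ : Finset (Fin k)).filter fun p => w p ≤ t₂ with hT
    have hTne : T.Nonempty := by
      by_contra hc
      rw [Finset.not_nonempty_iff_eq_empty] at hc
      rw [hc] at h2
      simp only [Finset.card_empty, Nat.cast_zero] at h2
      nlinarith
    obtain ⟨p₁, hp₁, hmax₁⟩ := Finset.exists_max_image T w hTne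
    have hp₁t : w p₁ ≤ t₂ := (Finset.mem_filter.mp hp₁).2
    have hs₁ : w p₁ ∈ S := by
      refine ⟨⟨p₁, rfl⟩, ?_⟩
      rw [hcard]
      have hsub : T ⊆ (Finset.univ : Finset (Fin k)).filter fun p => w p ≤ w p₁ := by
        intro q hq
        exact Finset.mem_filter.mpr ⟨Finset.mem_univ q, hmax₁ q hq⟩
      have hcc := (Nat.cast_le (α := ℝ)).mpr (Finset.card_le_card hsub)
      linarith
    exact le_trans (csInf_le hbdd hs₁) hp₁t

lemma quant_zero {k : ℕ} (hk : 0 < k) {a : ℝ} (ha1 : a ≤ 1) :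
    quant a (fun _ : Fin k => (0:ℝ)) = 0 := by
  classical
  haveI : Nonempty (Fin k) := ⟨⟨0, hk⟩⟩
  have hset : {s | s ∈ Set.range (fun _ : Fin k => (0:ℝ)) ∧
      a * (Fintype.card (Fin k) : ℝ) ≤
        (((Finset.univ : Finset (Fin k)).filter
          fun p => (fun _ : Fin k => (0:ℝ)) p ≤ s).card : ℝ)} = {(0:ℝ)} := by
    ext s
    simp only [Set.mem_setOf_eq, Set.range_const, Set.mem_singleton_iff]
    constructor
    · rintro ⟨hs, -⟩
      exact hs
    · rintro rfl
      refine ⟨rfl, ?_⟩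
      have hall : ((Finset.univ : Finset (Fin k)).filter
          fun p => (fun _ : Fin k => (0:ℝ)) p ≤ 0) = Finset.univ :=
        Finset.filter_true_of_mem (fun p _ => le_refl _)
      rw [hall]
      simp only [Finset.card_univ, Fintype.card_fin]
      have hkr := (Nat.cast_pos (α := ℝ)).mpr hk
      nlinarith
  rw [quant, hset, csInf_singleton]

instance unifIndex_finite (ℓ m : ℕ) : IsFiniteMeasure (unifIndex ℓ m) := by
  constructor
  rw [unifIndex, Measure.smul_apply, smul_eq_mul]
  have hcount : Measure.count (Set.univ : Set (Fin m × Fin (2 ^ ℓ))) < ⊤ :=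
    Measure.count_apply_lt_top.mpr Set.finite_univ
  rcases Nat.eq_zero_or_pos m with hm | hm
  · subst hm
    haveI : IsEmpty (Fin 0 × Fin (2 ^ ℓ)) := ⟨fun x => x.1.elim0⟩
    have h0 : (Measure.count (Set.univ : Set (Fin 0 × Fin (2 ^ ℓ)))) = 0 := by
      rw [Set.univ_eq_empty_iff.mpr ‹_›]
      exact measure_empty
    rw [h0, mul_zero]
    exact ENNReal.zero_lt_top
  · have hinv : (((m * 2 ^ ℓ : ℕ) : ℝ≥0∞))⁻¹ ≠ ⊤ := by
      rw [ENNReal.inv_ne_top]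
      have : (0:ℕ) < m * 2 ^ ℓ := by positivity
      exact_mod_cast this.ne'
    exact ENNReal.mul_lt_top (lt_top_iff_ne_top.mpr hinv) hcount

lemma unifIndex_singleton (ℓ m : ℕ) (ω : Fin m × Fin (2 ^ ℓ)) :
    unifIndex ℓ m {ω} = ((m * 2 ^ ℓ : ℕ) : ℝ≥0∞)⁻¹ := by
  rw [unifIndex, Measure.smul_apply, Measure.count_singleton, smul_eq_mul, mul_one]

lemma indexMeasure_apply (ℓ m k : ℕ) (A : Set (Fin k → Fin m × Fin (2 ^ ℓ))) :
    indexMeasure ℓ m k A =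
      (((Finset.univ : Finset (Fin k → Fin m × Fin (2 ^ ℓ))).filter
          fun f => f ∈ A).card : ℝ≥0∞) *
        (((m * 2 ^ ℓ : ℕ) : ℝ≥0∞)⁻¹) ^ k := by
  classical
  have hA : A = ⋃ f ∈ ((Finset.univ : Finset (Fin k → Fin m × Fin (2 ^ ℓ))).filter
      fun f => f ∈ A), ({f} : Set (Fin k → Fin m × Fin (2 ^ ℓ))) := by
    ext g
    simp
  have hsum : indexMeasure ℓ m k A =
      ∑ f ∈ ((Finset.univ : Finset (Fin k → Fin m × Fin (2 ^ ℓ))).filter fun f => f ∈ A),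
        indexMeasure ℓ m k {f} := by
    conv_lhs => rw [hA]
    apply measure_biUnion_finset
    · intro f hf f' hf' hne
      simp only [Set.disjoint_singleton_left, Set.mem_singleton_iff]
      exact hne
    · intro f hf
      exact measurableSet_singleton f
  have hsing : ∀ f : Fin k → Fin m × Fin (2 ^ ℓ),
      indexMeasure ℓ m k {f} = (((m * 2 ^ ℓ : ℕ) : ℝ≥0∞)⁻¹) ^ k := by
    intro f
    rw [← Set.univ_pi_singleton f, indexMeasure, Measure.pi_pi]
    simp [unifIndex_singleton]
  rw [hsum, Finset.sum_congr rfl (fun f _ => hsing f), Finset.sum_const, nsmul_eq_mul]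

lemma indexMeasure_univ (ℓ m k : ℕ) (hm : 0 < m) :
    indexMeasure ℓ m k Set.univ = 1 := by
  rw [indexMeasure_apply]
  simp only [Set.mem_univ, Finset.filter_true, Finset.filter_true_of_mem (fun _ _ => trivial)]
  rw [Finset.card_univ, Fintype.card_pi]
  have hcard : ∀ _i : Fin k, Fintype.card (Fin m × Fin (2 ^ ℓ)) = m * 2 ^ ℓ := by
    intro i; simp
  have hN : ((m * 2 ^ ℓ : ℕ) : ℝ≥0∞) ≠ 0 := by
    simp only [ne_eq, Nat.cast_eq_zero, Nat.mul_eq_zero, not_or]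
    constructor
    · omega
    · positivity
  rw [Finset.prod_congr rfl (fun i _ => hcard i), Finset.prod_const, Finset.card_univ,
    Fintype.card_fin]
  rw [Nat.cast_pow, ← mul_pow, ENNReal.mul_inv_cancel hN (ENNReal.natCast_ne_top _), one_pow]

lemma measure_le_of_card_le (ℓ m k : ℕ) (hm : 0 < m) (A : Set (Fin k → Fin m × Fin (2 ^ ℓ)))
    {E₀ : ℝ} (hE₀ : 0 ≤ E₀)
    (hcard : ((((Finset.univ : Finset (Fin k → Fin m × Fin (2 ^ ℓ))).filter
        fun f => f ∈ A).card : ℕ) : ℝ) ≤ E₀ * ((m * 2 ^ ℓ : ℕ) : ℝ) ^ k) :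
    indexMeasure ℓ m k A ≤ ENNReal.ofReal E₀ := by
  rw [indexMeasure_apply]
  set N : ℕ := m * 2 ^ ℓ with hN
  set c : ℕ := ((Finset.univ : Finset (Fin k → Fin m × Fin (2 ^ ℓ))).filter
    fun f => f ∈ A).card with hc
  have hN0 : (N : ℝ≥0∞) ≠ 0 := by
    simp only [ne_eq, Nat.cast_eq_zero, hN, Nat.mul_eq_zero, not_or]
    constructor
    · omega
    · positivity
  have key : ((c:ℕ):ℝ≥0∞) ≤ ENNReal.ofReal E₀ * ((N:ℕ):ℝ≥0∞)^k := by
    rw [← ENNReal.ofReal_natCast c, ← ENNReal.ofReal_natCast N,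
      ← ENNReal.ofReal_pow (Nat.cast_nonneg N), ← ENNReal.ofReal_mul hE₀]
    exact ENNReal.ofReal_le_ofReal hcard
  calc ((c:ℕ):ℝ≥0∞) * (((N:ℕ):ℝ≥0∞)⁻¹)^k
      ≤ (ENNReal.ofReal E₀ * ((N:ℕ):ℝ≥0∞)^k) * (((N:ℕ):ℝ≥0∞)⁻¹)^k :=
        mul_le_mul_left key _
    _ = ENNReal.ofReal E₀ * (((N:ℕ):ℝ≥0∞) * ((N:ℕ):ℝ≥0∞)⁻¹)^k := by
        rw [mul_assoc, ← mul_pow]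
    _ = ENNReal.ofReal E₀ := by
        rw [ENNReal.mul_inv_cancel hN0 (ENNReal.natCast_ne_top _), one_pow, mul_one]

lemma gauss_ne_zero {s : Set ℝ} (hs : MeasureTheory.volume s ≠ 0) :
    gaussianReal 0 1 s ≠ 0 := by
  intro h
  exact hs (gaussianReal_absolutelyContinuous' 0 one_ne_zero h)

lemma gaussAlpha_pos : 0 < gaussAlpha := by
  rw [gaussAlpha]
  apply ENNReal.toReal_pos
  · apply gauss_ne_zero
    rw [Real.volume_Iic]
    exact ENNReal.top_ne_zero
  · exact measure_ne_top _ _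

lemma gaussAlpha_lt_one : gaussAlpha < 1 := by
  rw [gaussAlpha]
  have hdisj : Disjoint (Set.Iic (3:ℝ)) (Set.Ioi 3) := Set.Iic_disjoint_Ioi le_rfl
  have hunion : Set.Iic (3:ℝ) ∪ Set.Ioi 3 = Set.univ := Set.Iic_union_Ioi
  have hsum : gaussianReal 0 1 (Set.Iic 3) + gaussianReal 0 1 (Set.Ioi 3) = 1 := by
    rw [← measure_union hdisj measurableSet_Ioi, hunion, measure_univ]
  have hI : gaussianReal 0 1 (Set.Ioi (3:ℝ)) ≠ 0 := by
    apply gauss_ne_zero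
    rw [Real.volume_Ioi]
    exact ENNReal.top_ne_zero
  have h1 : (gaussianReal 0 1 (Set.Iic (3:ℝ))).toReal +
      (gaussianReal 0 1 (Set.Ioi (3:ℝ))).toReal = 1 := by
    rw [← ENNReal.toReal_add (measure_ne_top _ _) (measure_ne_top _ _), hsum]
    simp
  have h2 : 0 < (gaussianReal 0 1 (Set.Ioi (3:ℝ))).toReal :=
    ENNReal.toReal_pos hI (measure_ne_top _ _)
  linarith

lemma gaussBeta_pos : 0 < gaussBeta := gaussianPDFReal_pos 0 1 4 one_ne_zero

lemma gaussBeta_le_one : gaussBeta ≤ 1 := by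
  rw [gaussBeta, gaussianPDFReal]
  have h1 : (1:ℝ) ≤ Real.sqrt (2 * π * (1:ℝ≥0)) := by
    rw [Real.one_le_sqrt]
    · push_cast
      nlinarith [Real.pi_gt_three]
  have h2 : (Real.sqrt (2 * π * (1:ℝ≥0)))⁻¹ ≤ 1 := by
    rw [inv_le_one_iff₀]
    right; exact h1
  have h3 : Real.exp (-(4 - 0)^2 / (2 * ((1:ℝ≥0):ℝ))) ≤ 1 := by
    rw [Real.exp_le_one_iff]
    push_cast
    norm_num
  calc (Real.sqrt (2 * π * (1:ℝ≥0)))⁻¹ * Real.exp (-(4 - 0)^2 / (2 * ((1:ℝ≥0):ℝ))) ≤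
      1 * 1 := by
        apply mul_le_mul h2 h3 (Real.exp_pos _).le (by norm_num)
    _ = 1 := by norm_num

lemma failprob {b δ : ℝ} (n : ℕ) {k : ℕ} (hb0 : 0 < b) (hδ0 : 0 < δ) (hδ : δ < 1/2)
    (hk : 512 * b⁻¹ ^ 2 * (Real.log n + Real.log (1/δ)) ≤ (k:ℝ)) :
    (n : ℝ) * (2 * Real.exp (-((k:ℝ) * b ^ 2) / 64)) ≤ δ / 4 := by
  rcases Nat.eq_zero_or_pos n with hn | hn
  · subst hn
    simp only [Nat.cast_zero, zero_mul]
    positivity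
  · have hnr : (1:ℝ) ≤ (n:ℝ) := by exact_mod_cast hn
    have hlogn : 0 ≤ Real.log n := Real.log_nonneg hnr
    have hδinv : (2:ℝ) ≤ 1/δ := by
      rw [le_div_iff₀ hδ0]; linarith
    have hlog2 : 0 < Real.log 2 := Real.log_pos (by norm_num)
    have hlogδ : Real.log 2 ≤ Real.log (1/δ) := Real.log_le_log (by norm_num) hδinv
    have hkey : 512 * (Real.log n + Real.log (1/δ)) ≤ (k:ℝ) * b ^ 2 := by
      have h1 := mul_le_mul_of_nonneg_right hk (sq_nonneg b)
      have h2 : 512 * b⁻¹ ^ 2 * (Real.log n + Real.log (1/δ)) * b ^ 2 =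
          512 * (Real.log n + Real.log (1/δ)) * (b⁻¹ * b) ^ 2 := by ring
      rw [inv_mul_cancel₀ hb0.ne'] at h2
      rw [h2] at h1
      linarith [h1]
    have hlog8 : Real.log 8 = 3 * Real.log 2 := by
      rw [show (8:ℝ) = 2 ^ (3:ℕ) by norm_num, Real.log_pow]
      push_cast; ring
    have hexp : Real.exp (-((k:ℝ) * b ^ 2) / 64) ≤ δ / (8 * n) := by
      have hpos : (0:ℝ) < 8 * n * (1/δ) := by positivity
      have h3 : Real.log (8 * n * (1/δ)) ≤ (k:ℝ) * b ^ 2 / 64 := by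
        rw [Real.log_mul (by positivity) (by positivity),
          Real.log_mul (by norm_num) (by positivity), hlog8]
        nlinarith
      have h4 : Real.exp (-((k:ℝ) * b ^ 2) / 64) ≤ Real.exp (-(Real.log (8 * n * (1/δ)))) := by
        apply Real.exp_le_exp.mpr
        linarith
      rw [Real.exp_neg, Real.exp_log hpos] at h4
      have h5 : (8 * (n:ℝ) * (1/δ))⁻¹ = δ / (8 * n) := by
        field_simp
      rwa [h5] at h4
    calc (n:ℝ) * (2 * Real.exp (-((k:ℝ) * b ^ 2) / 64)) ≤ (n:ℝ) * (2 * (δ / (8 * n))) := by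
          apply mul_le_mul_of_nonneg_left _ (by positivity)
          linarith
      _ = δ / 4 := by
          field_simp
          ring

lemma rht_sub (ℓ m : ℕ) (D : Fin m → Fin (2 ^ ℓ) → ℝ) (x y : EuclideanSpace ℝ (Fin (2 ^ ℓ)))
    (j : Fin m) (q : Fin (2 ^ ℓ)) :
    rht ℓ m D x j q - rht ℓ m D y j q = rht ℓ m D (x - y) j q := by
  simp only [rht, Matrix.mulVec, dotProduct]
  rw [← Finset.sum_sub_distrib]
  apply Finset.sum_congr rfl
  intro i _
  have hxy : (x - y) i = x i - y i := rfl
  rw [hxy]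
  ring

lemma rht_smul (ℓ m : ℕ) (D : Fin m → Fin (2 ^ ℓ) → ℝ) (c : ℝ)
    (z : EuclideanSpace ℝ (Fin (2 ^ ℓ))) (j : Fin m) (q : Fin (2 ^ ℓ)) :
    rht ℓ m D (c • z) j q = c * rht ℓ m D z j q := by
  simp only [rht, Matrix.mulVec, dotProduct, Finset.mul_sum]
  apply Finset.sum_congr rfl
  intro i _
  have hz : (c • z) i = c * z i := rfl
  rw [hz]
  ring

end QTE
/-- Claim 5.3: for every fixed realization of the diagonals
satisfying the empirical-CDF bounds, the subsampled quantiles estimate all `n`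
distances up to a factor in `[2,4]`, with high probability over the indices. -/
theorem quantile_truncation_estimate :
    ∃ C : ℝ, 0 < C ∧
      ∀ (ℓ m : ℕ) (δ : ℝ), δ ∈ Set.Ioo (0 : ℝ) (1 / 2) →
        ∀ (n : ℕ) (x : EuclideanSpace ℝ (Fin (2 ^ ℓ)))
          (xs : Fin n → EuclideanSpace ℝ (Fin (2 ^ ℓ))) (D : Fin m → Fin (2 ^ ℓ) → ℝ),
          (∀ z : EuclideanSpace ℝ (Fin (2 ^ ℓ)), ‖z‖ = 1 →
            (1 / ((m : ℝ) * 2 ^ ℓ)) *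
                ∑ p, ∑ q, (if rht ℓ m D z p q ≤ 2 then (1 : ℝ) else 0) ≤
              gaussAlpha - gaussBeta / 4 ∧
            gaussAlpha + gaussBeta / 4 ≤
              (1 / ((m : ℝ) * 2 ^ ℓ)) *
                ∑ p, ∑ q, (if rht ℓ m D z p q ≤ 4 then (1 : ℝ) else 0)) →
          ∀ k : ℕ, C * gaussBeta⁻¹ ^ 2 * (Real.log n + Real.log (1 / δ)) ≤ (k : ℝ) →
            ENNReal.ofReal (1 - δ / 4) ≤
              indexMeasure ℓ m k
                {L | ∀ i : Fin n,
                  2 * ‖x - xs i‖ ≤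
                      quant gaussAlpha (fun p : Fin k =>
                        rht ℓ m D x (L p).1 (L p).2 - rht ℓ m D (xs i) (L p).1 (L p).2) ∧
                    quant gaussAlpha (fun p : Fin k =>
                        rht ℓ m D x (L p).1 (L p).2 - rht ℓ m D (xs i) (L p).1 (L p).2) ≤
                      4 * ‖x - xs i‖} := by

  refine ⟨512, by norm_num, ?_⟩
  intro ℓ m δ hδ n x xs D hD k hk
  obtain ⟨hδ0, hδhalf⟩ := hδ
  have hα0 := QTE.gaussAlpha_pos
  have hα1 := QTE.gaussAlpha_lt_one
  have hβ0 := QTE.gaussBeta_pos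
  have hβ1 := QTE.gaussBeta_le_one
  have hd0 : 0 < 2 ^ ℓ := by positivity
  -- m is positive
  have hm : 0 < m := by
    rcases Nat.eq_zero_or_pos m with hm0 | hm
    · exfalso
      set z₀ : EuclideanSpace ℝ (Fin (2 ^ ℓ)) := EuclideanSpace.single ⟨0, hd0⟩ (1:ℝ) with hz₀def
      have hz₀ : ‖z₀‖ = 1 := by
        rw [hz₀def, EuclideanSpace.norm_single]
        norm_num
      have h := (hD z₀ hz₀).2
      subst hm0
      simp only [Nat.cast_zero, zero_mul, one_div, Finset.univ_eq_empty, Finset.sum_empty,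
        mul_zero] at h
      nlinarith
    · exact hm
  -- k is positive
  have hkpos : 0 < k := by
    rcases Nat.eq_zero_or_pos k with hk0 | hk1
    · exfalso
      subst hk0
      have hlogn : 0 ≤ Real.log n := by
        rcases Nat.eq_zero_or_pos n with hn | hn
        · subst hn; simp
        · exact Real.log_nonneg (by exact_mod_cast hn)
      have hlogδ : 0 < Real.log (1/δ) := Real.log_pos (by rw [lt_div_iff₀ hδ0]; linarith)
      have hpos : 0 < 512 * gaussBeta⁻¹ ^ 2 * (Real.log n + Real.log (1/δ)) := by positivity
      simp only [Nat.cast_zero] at hk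
      linarith
    · exact hk1
  classical
  set E₀ : ℝ := Real.exp (-((k:ℝ) * gaussBeta ^ 2) / 64) with hE₀def
  have hE₀ : 0 ≤ E₀ := (Real.exp_pos _).le
  set zf : Fin n → EuclideanSpace ℝ (Fin (2 ^ ℓ)) :=
    fun i => ‖x - xs i‖⁻¹ • (x - xs i) with hzf
  set Bad : Fin n → Set (Fin k → Fin m × Fin (2 ^ ℓ)) := fun i =>
    if x = xs i then ∅ else
      ({L : Fin k → Fin m × Fin (2 ^ ℓ) | gaussAlpha * k ≤
          ∑ p, (if rht ℓ m D (zf i) (L p).1 (L p).2 ≤ 2 then (1:ℝ) else 0)} ∪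
       {L : Fin k → Fin m × Fin (2 ^ ℓ) | ¬ gaussAlpha * k ≤
          ∑ p, (if rht ℓ m D (zf i) (L p).1 (L p).2 ≤ 4 then (1:ℝ) else 0)}) with hBad
  have hNcast : ((m * 2 ^ ℓ : ℕ) : ℝ) = (m : ℝ) * 2 ^ ℓ := by push_cast; ring
  have hNr : (0:ℝ) < (m : ℝ) * 2 ^ ℓ := by
    have : (0:ℝ) < (m:ℝ) := by exact_mod_cast hm
    positivity
  have hcardΩ : (Fintype.card (Fin m × Fin (2 ^ ℓ)) : ℝ) = (m : ℝ) * 2 ^ ℓ := by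
    simp [Fintype.card_prod]
  -- measure of each bad event
  have hBadle : ∀ i, indexMeasure ℓ m k (Bad i) ≤ ENNReal.ofReal (2 * E₀) := by
    intro i
    rw [hBad]
    by_cases hxi : x = xs i
    · simp only [if_pos hxi, measure_empty]
      exact zero_le
    · simp only [if_neg hxi]
      have hz1 : ‖zf i‖ = 1 := by
        rw [hzf]
        exact norm_smul_inv_norm (sub_ne_zero.mpr hxi)
      obtain ⟨hD2, hD4⟩ := hD (zf i) hz1
      -- mean bounds in the form chernoff wants
      have hmean2 : ∑ ω : Fin m × Fin (2 ^ ℓ),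
          (if rht ℓ m D (zf i) ω.1 ω.2 ≤ 2 then (1:ℝ) else 0) ≤
          (gaussAlpha - gaussBeta / 4) * (Fintype.card (Fin m × Fin (2 ^ ℓ)) : ℝ) := by
        rw [hcardΩ, Fintype.sum_prod_type]
        have h' := mul_le_mul_of_nonneg_left hD2 hNr.le
        rw [← mul_assoc, mul_one_div, div_self hNr.ne', one_mul] at h'
        linarith [h']
      have hmean4 : (gaussAlpha + gaussBeta / 4) * (Fintype.card (Fin m × Fin (2 ^ ℓ)) : ℝ) ≤
          ∑ ω : Fin m × Fin (2 ^ ℓ),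
            (if rht ℓ m D (zf i) ω.1 ω.2 ≤ 4 then (1:ℝ) else 0) := by
        rw [hcardΩ, Fintype.sum_prod_type]
        have h' := mul_le_mul_of_nonneg_left hD4 hNr.le
        rw [← mul_assoc, mul_one_div, div_self hNr.ne', one_mul] at h'
        linarith [h']
      have hg2 : ∀ ω : Fin m × Fin (2 ^ ℓ),
          (if rht ℓ m D (zf i) ω.1 ω.2 ≤ 2 then (1:ℝ) else 0) = 0 ∨
          (if rht ℓ m D (zf i) ω.1 ω.2 ≤ 2 then (1:ℝ) else 0) = 1 := by
        intro ω
        by_cases h : rht ℓ m D (zf i) ω.1 ω.2 ≤ 2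
        · right; rw [if_pos h]
        · left; rw [if_neg h]
      have hg4 : ∀ ω : Fin m × Fin (2 ^ ℓ),
          (if rht ℓ m D (zf i) ω.1 ω.2 ≤ 4 then (1:ℝ) else 0) = 0 ∨
          (if rht ℓ m D (zf i) ω.1 ω.2 ≤ 4 then (1:ℝ) else 0) = 1 := by
        intro ω
        by_cases h : rht ℓ m D (zf i) ω.1 ω.2 ≤ 4
        · right; rw [if_pos h]
        · left; rw [if_neg h]
      have hch2 := QTE.chernoff (fun ω : Fin m × Fin (2 ^ ℓ) =>
          if rht ℓ m D (zf i) ω.1 ω.2 ≤ 2 then (1:ℝ) else 0) hg2 hβ0 hβ1 hα1.le hmean2 k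
      have hch4 := QTE.chernoff' (fun ω : Fin m × Fin (2 ^ ℓ) =>
          if rht ℓ m D (zf i) ω.1 ω.2 ≤ 4 then (1:ℝ) else 0) hg4 hβ0 hβ1 hα0.le hmean4 k
      have hm2 : indexMeasure ℓ m k
          {L : Fin k → Fin m × Fin (2 ^ ℓ) | gaussAlpha * k ≤
            ∑ p, (if rht ℓ m D (zf i) (L p).1 (L p).2 ≤ 2 then (1:ℝ) else 0)} ≤
          ENNReal.ofReal E₀ := by
        apply QTE.measure_le_of_card_le ℓ m k hm _ hE₀
        rw [hNcast]
        rw [show (Fintype.card (Fin m × Fin (2 ^ ℓ)) : ℝ) = (m:ℝ) * 2 ^ ℓ from hcardΩ] at hch2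
        convert hch2 using 4 with f
        exact Iff.rfl
      have hm4 : indexMeasure ℓ m k
          {L : Fin k → Fin m × Fin (2 ^ ℓ) | ¬ gaussAlpha * k ≤
            ∑ p, (if rht ℓ m D (zf i) (L p).1 (L p).2 ≤ 4 then (1:ℝ) else 0)} ≤
          ENNReal.ofReal E₀ := by
        apply QTE.measure_le_of_card_le ℓ m k hm _ hE₀
        rw [hNcast]
        rw [show (Fintype.card (Fin m × Fin (2 ^ ℓ)) : ℝ) = (m:ℝ) * 2 ^ ℓ from hcardΩ] at hch4
        convert hch4 using 4 with f
        exact Iff.rfl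
      calc indexMeasure ℓ m k (_ ∪ _) ≤ _ + _ := measure_union_le _ _
        _ ≤ ENNReal.ofReal E₀ + ENNReal.ofReal E₀ := add_le_add hm2 hm4
        _ = ENNReal.ofReal (2 * E₀) := by
            rw [← ENNReal.ofReal_add hE₀ hE₀]
            ring_nf
  -- union bound
  set B : Set (Fin k → Fin m × Fin (2 ^ ℓ)) := ⋃ i, Bad i with hB
  have hBle : indexMeasure ℓ m k B ≤ ENNReal.ofReal (δ / 4) := by
    calc indexMeasure ℓ m k B ≤ ∑ i, indexMeasure ℓ m k (Bad i) :=
          measure_iUnion_fintype_le _ _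
      _ ≤ ∑ _i : Fin n, ENNReal.ofReal (2 * E₀) := Finset.sum_le_sum (fun i _ => hBadle i)
      _ = (n : ℝ≥0∞) * ENNReal.ofReal (2 * E₀) := by
          rw [Finset.sum_const, Finset.card_univ, Fintype.card_fin, nsmul_eq_mul]
      _ = ENNReal.ofReal ((n:ℝ) * (2 * E₀)) := by
          rw [ENNReal.ofReal_mul (Nat.cast_nonneg n), ENNReal.ofReal_natCast]
      _ ≤ ENNReal.ofReal (δ / 4) :=
          ENNReal.ofReal_le_ofReal (QTE.failprob n hβ0 hδ0 hδhalf hk)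
  -- the good set contains the complement of B
  have hsub : Bᶜ ⊆ {L : Fin k → Fin m × Fin (2 ^ ℓ) | ∀ i : Fin n,
      2 * ‖x - xs i‖ ≤
          quant gaussAlpha (fun p : Fin k =>
            rht ℓ m D x (L p).1 (L p).2 - rht ℓ m D (xs i) (L p).1 (L p).2) ∧
        quant gaussAlpha (fun p : Fin k =>
            rht ℓ m D x (L p).1 (L p).2 - rht ℓ m D (xs i) (L p).1 (L p).2) ≤
          4 * ‖x - xs i‖} := by
    intro L hL
    rw [Set.mem_compl_iff, hB, Set.mem_iUnion, not_exists] at hL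
    intro i
    have hLi := hL i
    by_cases hxi : x = xs i
    · have hnorm : ‖x - xs i‖ = 0 := by rw [hxi, sub_self, norm_zero]
      have hfun : (fun p : Fin k =>
          rht ℓ m D x (L p).1 (L p).2 - rht ℓ m D (xs i) (L p).1 (L p).2) =
          fun _ : Fin k => (0:ℝ) := by
        funext p
        rw [hxi, sub_self]
      rw [hfun, hnorm, QTE.quant_zero hkpos hα1.le]
      norm_num
    · rw [hBad] at hLi
      simp only [if_neg hxi, Set.mem_union, not_or, Set.mem_setOf_eq, not_not] at hLi
      obtain ⟨hL2, hL4⟩ := hLi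
      have hvne : x - xs i ≠ 0 := sub_ne_zero.mpr hxi
      have hc : 0 < ‖x - xs i‖ := norm_pos_iff.mpr hvne
      have hw : ∀ p : Fin k, rht ℓ m D x (L p).1 (L p).2 - rht ℓ m D (xs i) (L p).1 (L p).2 =
          ‖x - xs i‖ * rht ℓ m D (zf i) (L p).1 (L p).2 := by
        intro p
        rw [QTE.rht_sub]
        have hv : x - xs i = ‖x - xs i‖ • zf i := by
          rw [hzf]
          exact (smul_inv_smul₀ hc.ne' (x - xs i)).symm
        conv_lhs => rw [hv]
        rw [QTE.rht_smul]
      have hcount2 : (((Finset.univ : Finset (Fin k)).filter fun p =>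
          (rht ℓ m D x (L p).1 (L p).2 - rht ℓ m D (xs i) (L p).1 (L p).2) ≤
            2 * ‖x - xs i‖).card : ℝ) < gaussAlpha * k := by
        have hEq : ((Finset.univ : Finset (Fin k)).filter fun p =>
            (rht ℓ m D x (L p).1 (L p).2 - rht ℓ m D (xs i) (L p).1 (L p).2) ≤
              2 * ‖x - xs i‖) =
            ((Finset.univ : Finset (Fin k)).filter fun p =>
              rht ℓ m D (zf i) (L p).1 (L p).2 ≤ 2) := by
          apply Finset.filter_congr
          intro p _
          rw [hw p, show (2:ℝ) * ‖x - xs i‖ = ‖x - xs i‖ * 2 from mul_comm _ _]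
          exact mul_le_mul_iff_right₀ hc
        rw [hEq]
        have hb := Finset.sum_boole (R := ℝ)
          (fun p => rht ℓ m D (zf i) (L p).1 (L p).2 ≤ 2) (Finset.univ : Finset (Fin k))
        have hlt := lt_of_not_ge hL2
        rw [hb] at hlt
        exact hlt
      have hcount4 : gaussAlpha * k ≤ (((Finset.univ : Finset (Fin k)).filter fun p =>
          (rht ℓ m D x (L p).1 (L p).2 - rht ℓ m D (xs i) (L p).1 (L p).2) ≤
            4 * ‖x - xs i‖).card : ℝ) := by
        have hEq : ((Finset.univ : Finset (Fin k)).filter fun p =>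
            (rht ℓ m D x (L p).1 (L p).2 - rht ℓ m D (xs i) (L p).1 (L p).2) ≤
              4 * ‖x - xs i‖) =
            ((Finset.univ : Finset (Fin k)).filter fun p =>
              rht ℓ m D (zf i) (L p).1 (L p).2 ≤ 4) := by
          apply Finset.filter_congr
          intro p _
          rw [hw p, show (4:ℝ) * ‖x - xs i‖ = ‖x - xs i‖ * 4 from mul_comm _ _]
          exact mul_le_mul_iff_right₀ hc
        rw [hEq]
        have hb := Finset.sum_boole (R := ℝ)
          (fun p => rht ℓ m D (zf i) (L p).1 (L p).2 ≤ 4) (Finset.univ : Finset (Fin k))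
        rw [hb] at hL4
        exact hL4
      exact QTE.quant_bounds hkpos hα0 hα1.le _ hcount2 hcount4
  -- conclude
  have huniv := QTE.indexMeasure_univ ℓ m k hm
  have h1 : (1:ℝ≥0∞) ≤ indexMeasure ℓ m k Bᶜ + indexMeasure ℓ m k B := by
    rw [← huniv]
    calc indexMeasure ℓ m k Set.univ = indexMeasure ℓ m k (Bᶜ ∪ B) := by
          rw [Set.compl_union_self]
      _ ≤ _ := measure_union_le _ _
  have h2 := measure_mono (μ := indexMeasure ℓ m k) hsub
  have h3 : ENNReal.ofReal (1 - δ/4) + ENNReal.ofReal (δ/4) = 1 := by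
    rw [← ENNReal.ofReal_add (by linarith) (by linarith)]
    norm_num
  have h4 : ENNReal.ofReal (1 - δ/4) + ENNReal.ofReal (δ/4) ≤
      indexMeasure ℓ m k {L : Fin k → Fin m × Fin (2 ^ ℓ) | ∀ i : Fin n,
        2 * ‖x - xs i‖ ≤
            quant gaussAlpha (fun p : Fin k =>
              rht ℓ m D x (L p).1 (L p).2 - rht ℓ m D (xs i) (L p).1 (L p).2) ∧
          quant gaussAlpha (fun p : Fin k =>
              rht ℓ m D x (L p).1 (L p).2 - rht ℓ m D (xs i) (L p).1 (L p).2) ≤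
            4 * ‖x - xs i‖} + ENNReal.ofReal (δ/4) := by
    rw [h3]
    calc (1:ℝ≥0∞) ≤ indexMeasure ℓ m k Bᶜ + indexMeasure ℓ m k B := h1
      _ ≤ _ := add_le_add h2 hBle
  exact (ENNReal.add_le_add_iff_right ENNReal.ofReal_ne_top).mp h4
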